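/- Assume the cocycle is multiplicative, i.e. κ_{n+m}(x) = κ_n(x)·κ_m(f^[n](x)) for all n, m ≥ 0 and x ∈ X. Then for every x ∈ X the sequence [κ_n(x)]^{1/n} converges as n → ∞ to a limit κ_+(x), and the limit function satisfies κ_+(f(x)) = κ_+(x) for all x ∈ X. -/

import Mathlib

open Filter Topology Set Function TopologicalSpace
open scoped Classical

set_option linter.unusedSectionVars false
set_option linter.unusedVariables false
set_option maxHeartbeats 1000000

namespace Stmt14

variable {X : Type*} [TopologicalSpace X]

/-- number of visits of the orbit of `x` under `g` to `T` among times `< n`. -/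
noncomputable def vcnt (g : X → X) (T : Set X) (x : X) (n : ℕ) : ℕ :=
  ∑ i ∈ Finset.range n, if g^[i] x ∈ T then 1 else 0

lemma vcnt_succ (g : X → X) (T : Set X) (x : X) (n : ℕ) :
    vcnt g T x (n + 1) = vcnt g T x n + (if g^[n] x ∈ T then 1 else 0) :=
  Finset.sum_range_succ _ _

lemma vcnt_mono (g : X → X) (T : Set X) (x : X) : Monotone (vcnt g T x) :=
  fun _ _ h => Finset.sum_le_sum_of_subset (Finset.range_subset_range.2 h)

lemma vcnt_le (g : X → X) (T : Set X) (x : X) (n : ℕ) : vcnt g T x n ≤ n := by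
  calc vcnt g T x n ≤ ∑ _i ∈ Finset.range n, 1 :=
        Finset.sum_le_sum (fun i _ => by split <;> omega)
  _ = n := by simp

lemma vcnt_shift (g : X → X) (T : Set X) (x : X) (p : ℕ) :
    ∀ m, vcnt g T x (p + m) = vcnt g T x p + vcnt g T (g^[p] x) m := by
  intro m
  induction m with
  | zero => simp [vcnt]
  | succ m ih =>
    have h : p + (m + 1) = (p + m) + 1 := by omega
    rw [h, vcnt_succ, ih, vcnt_succ]
    have h2 : g^[p + m] x = g^[m] (g^[p] x) := by
      rw [add_comm p m, Function.iterate_add_apply]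
    rw [h2, add_assoc]

lemma vcnt_eq_card (g : X → X) (T : Set X) (x : X) (n : ℕ) :
    vcnt g T x n = ((Finset.range n).filter (fun i => g^[i] x ∈ T)).card :=
  (Finset.card_filter _ _).symm

lemma vcnt_pos_exists (g : X → X) (T : Set X) (x : X) (n : ℕ) (h : vcnt g T x n ≠ 0) :
    ∃ i, i < n ∧ g^[i] x ∈ T := by
  by_contra hc
  push_neg at hc
  exact h (Finset.sum_eq_zero (fun i hi => by
    rw [if_neg (hc i (Finset.mem_range.1 hi))]))

lemma vcnt_block (g : X → X) (T : Set X) (y : X) (d : ℕ) :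
    ∀ Q, vcnt g T y (d * Q) = ∑ c ∈ Finset.range d, vcnt (g^[d]) ((g^[c])⁻¹' T) y Q := by
  intro Q
  induction Q with
  | zero => simp [vcnt]
  | succ Q ih =>
    have h1 : d * (Q + 1) = d * Q + d := by ring
    rw [h1, vcnt_shift, ih]
    have h2 : ∀ c ∈ Finset.range d, vcnt (g^[d]) ((g^[c])⁻¹' T) y (Q + 1)
        = vcnt (g^[d]) ((g^[c])⁻¹' T) y Q + (if g^[c] (g^[d * Q] y) ∈ T then 1 else 0) := by
      intro c _
      rw [vcnt_succ]
      congr 2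
      have h3 : (g^[d])^[Q] y = g^[d * Q] y := by rw [Function.iterate_mul]
      simp [Set.mem_preimage, h3]
    rw [Finset.sum_congr rfl h2, Finset.sum_add_distrib]
    congr 1


/-- positive upper density of a counting sequence -/
def posdens (u : ℕ → ℕ) : Prop :=
  ∃ ε : ℝ, 0 < ε ∧ ∀ N : ℕ, ∃ n, N ≤ n ∧ ε * n ≤ (u n : ℝ)

lemma tendsto_zero_of_not_posdens (u : ℕ → ℕ) (h : ¬ posdens u) :
    Tendsto (fun n => (u n : ℝ) / n) atTop (nhds 0) := by
  rw [posdens] at h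
  push_neg at h
  rw [Metric.tendsto_atTop]
  intro ε hε
  obtain ⟨N, hN⟩ := h (ε / 2) (by positivity)
  refine ⟨max N 1, fun n hn => ?_⟩
  have h1 : N ≤ n := le_trans (le_max_left _ _) hn
  have h2 : (1:ℕ) ≤ n := le_trans (le_max_right _ _) hn
  have hn0 : (0:ℝ) < n := by exact_mod_cast h2
  have := hN n h1
  rw [Real.dist_eq, sub_zero, abs_of_nonneg (by positivity)]
  rw [div_lt_iff₀ hn0]
  calc (u n : ℝ) < ε / 2 * n := this
  _ ≤ ε * n := by nlinarith

lemma pigeonhole (g : X → X) (T : Set X) (x : X) (h : posdens (vcnt g T x)) :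
    ∃ d : ℕ, 0 < d ∧ posdens (vcnt g (T ∩ (g^[d])⁻¹' T) x) := by
  obtain ⟨ε, hε, hdens⟩ := h
  obtain ⟨G, hG1, hGε⟩ : ∃ G : ℕ, 0 < G ∧ 4 / ε ≤ (G : ℝ) :=
    ⟨⌈4 / ε⌉₊, Nat.ceil_pos.mpr (by positivity), Nat.le_ceil _⟩
  have hGR : (0:ℝ) < G := by exact_mod_cast hG1
  -- key counting inequality for qualifying n
  have key : ∀ n : ℕ, (4 / ε ≤ (n : ℝ)) → (ε * n ≤ (vcnt g T x n : ℝ)) →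
      (ε / 2) * n ≤ ∑ d ∈ Finset.Icc 1 G, (vcnt g (T ∩ (g^[d])⁻¹' T) x n : ℝ) := by
    intro n hn hvis
    set A : Finset ℕ := (Finset.range n).filter (fun i => g^[i] x ∈ T) with hA
    set A2 : Finset ℕ := A.filter (fun v => ∀ d ∈ Finset.Icc 1 G, g^[v + d] x ∉ T) with hA2
    have hA2sub : A2 ⊆ A := Finset.filter_subset _ _
    have hA2card : A2.card ≤ n / G + 1 := by
      have hpair : ∀ v w, v ∈ A2 → w ∈ A2 → v < w → v / G = w / G → False := by
        intro v w hv hw hlt hvw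
        have hvA2 := Finset.mem_filter.1 hv
        have hwA := hA2sub hw
        have h1 := Nat.div_add_mod v G
        have h2 := Nat.div_add_mod w G
        rw [hvw] at h1
        have h3 : v % G < G := Nat.mod_lt _ hG1
        have h4 : w % G < G := Nat.mod_lt _ hG1
        have hd : 1 ≤ w - v ∧ w - v ≤ G := by
          generalize hk : G * (w / G) = k at h1 h2
          omega
        have : g^[v + (w - v)] x ∉ T := hvA2.2 (w - v) (Finset.mem_Icc.2 hd)
        have hvw' : v + (w - v) = w := by omega
        rw [hvw'] at this
        exact this (Finset.mem_filter.1 hwA).2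
      have hinj : Set.InjOn (fun v => v / G) A2 := by
        intro v hv w hw hvw
        have hvw2 : v / G = w / G := hvw
        by_contra hne
        rcases lt_or_gt_of_ne hne with hlt | hlt
        · exact hpair v w hv hw hlt hvw2
        · exact hpair w v hw hv hlt hvw2.symm
      have hmaps : ∀ v ∈ A2, v / G ∈ Finset.range (n / G + 1) := by
        intro v hv
        have : v < n := Finset.mem_range.1 (Finset.mem_filter.1 (hA2sub hv)).1
        exact Finset.mem_range.2 (by
          have := Nat.div_le_div_right (c := G) (le_of_lt this)
          omega)
      calc A2.card ≤ (Finset.range (n / G + 1)).card :=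
            Finset.card_le_card_of_injOn _ hmaps hinj
      _ = n / G + 1 := Finset.card_range _
    have hA1card : (A \ A2).card ≤ ∑ d ∈ Finset.Icc 1 G, vcnt g (T ∩ (g^[d])⁻¹' T) x n := by
      have hsub : A \ A2 ⊆ (Finset.Icc 1 G).biUnion
          (fun d => (Finset.range n).filter (fun i => g^[i] x ∈ T ∩ (g^[d])⁻¹' T)) := by
        intro v hv
        obtain ⟨hvA, hvn2⟩ := Finset.mem_sdiff.1 hv
        have hvA' := Finset.mem_filter.1 hvA
        have : ¬ (∀ d ∈ Finset.Icc 1 G, g^[v + d] x ∉ T) := by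
          intro hall
          exact hvn2 (Finset.mem_filter.2 ⟨hvA, hall⟩)
        push_neg at this
        obtain ⟨d, hd, hdT⟩ := this
        refine Finset.mem_biUnion.2 ⟨d, hd, Finset.mem_filter.2 ⟨hvA'.1, hvA'.2, ?_⟩⟩
        show g^[d] (g^[v] x) ∈ T
        rw [← Function.iterate_add_apply, add_comm d v]
        exact hdT
      calc (A \ A2).card ≤ _ := Finset.card_le_card hsub
      _ ≤ ∑ d ∈ Finset.Icc 1 G,
            ((Finset.range n).filter (fun i => g^[i] x ∈ T ∩ (g^[d])⁻¹' T)).card :=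
            Finset.card_biUnion_le
      _ = ∑ d ∈ Finset.Icc 1 G, vcnt g (T ∩ (g^[d])⁻¹' T) x n := by
            refine Finset.sum_congr rfl (fun d _ => ?_)
            rw [vcnt_eq_card]
            congr!
    have hcardA : vcnt g T x n = (A \ A2).card + A2.card := by
      rw [vcnt_eq_card, ← hA]
      exact (Finset.card_sdiff_add_card_eq_card hA2sub).symm
    -- now real arithmetic
    have c1 : ((n / G : ℕ) : ℝ) ≤ (n : ℝ) / G := Nat.cast_div_le
    have c2 : (n : ℝ) / G ≤ ε / 4 * n := by
      rw [div_le_iff₀ hGR]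
      have hn0 : (0:ℝ) ≤ n := Nat.cast_nonneg n
      have e1 : ε / 4 * n * (4 / ε) = n := by field_simp
      have e2 : ε / 4 * n * (4 / ε) ≤ ε / 4 * n * G :=
        mul_le_mul_of_nonneg_left hGε (by positivity)
      linarith
    have c3 : (1 : ℝ) ≤ ε / 4 * n := by
      have : (4:ℝ) / ε ≤ n := hn
      rw [div_le_iff₀ hε] at this
      nlinarith
    have c4 : ((A \ A2).card : ℝ) ≤ ∑ d ∈ Finset.Icc 1 G, (vcnt g (T ∩ (g^[d])⁻¹' T) x n : ℝ) := by
      exact_mod_cast hA1card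
    have c5 : (vcnt g T x n : ℝ) = ((A \ A2).card : ℝ) + (A2.card : ℝ) := by
      exact_mod_cast hcardA
    have c6 : ((A2.card : ℕ) : ℝ) ≤ (n : ℝ) / G + 1 := by
      calc ((A2.card : ℕ) : ℝ) ≤ ((n / G + 1 : ℕ) : ℝ) := by exact_mod_cast hA2card
      _ ≤ (n : ℝ) / G + 1 := by push_cast; linarith [c1]
    nlinarith
  -- pigeonhole over d
  by_contra hcon
  push_neg at hcon
  have hnp : ∀ d ∈ Finset.Icc 1 G, ∃ N : ℕ, ∀ n, N ≤ n →
      (vcnt g (T ∩ (g^[d])⁻¹' T) x n : ℝ) < ε / (2 * G) * n := by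
    intro d hd
    have hd1 : 0 < d := (Finset.mem_Icc.1 hd).1
    have := hcon d hd1
    rw [posdens] at this
    push_neg at this
    exact this (ε / (2 * G)) (by positivity)
  choose Nd hNd using hnp
  set N0 : ℕ := (Finset.Icc 1 G).attach.sup (fun d => Nd d.1 d.2)
  obtain ⟨n, hn1, hn2⟩ := hdens (max N0 ⌈4 / ε⌉₊)
  have hn4ε : 4 / ε ≤ (n : ℝ) := by
    calc 4 / ε ≤ (⌈4 / ε⌉₊ : ℝ) := Nat.le_ceil _
    _ ≤ n := by exact_mod_cast le_trans (le_max_right _ _) hn1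
  have hkey := key n hn4ε hn2
  have hne : (Finset.Icc 1 G).Nonempty := ⟨1, Finset.mem_Icc.2 ⟨le_refl 1, hG1⟩⟩
  have hlt : ∑ d ∈ Finset.Icc 1 G, (vcnt g (T ∩ (g^[d])⁻¹' T) x n : ℝ)
      < ∑ _d ∈ Finset.Icc 1 G, ε / (2 * G) * n := by
    refine Finset.sum_lt_sum_of_nonempty hne (fun d hd => ?_)
    refine hNd d hd n (le_trans ?_ hn1)
    calc Nd d hd ≤ N0 := Finset.le_sup (f := fun d' : {y // y ∈ Finset.Icc 1 G} => Nd d'.1 d'.2)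
          (Finset.mem_attach _ ⟨d, hd⟩)
    _ ≤ max N0 ⌈4 / ε⌉₊ := le_max_left _ _
  rw [Finset.sum_const, Nat.card_Icc] at hlt
  have hcard : (G + 1 - 1) = G := by omega
  rw [hcard] at hlt
  have : (G : ℝ) • (ε / (2 * G) * n) = ε / 2 * n := by
    rw [smul_eq_mul]
    field_simp
  rw [nsmul_eq_mul] at hlt
  have hGn : (G:ℝ) * (ε / (2 * G) * ↑n) = ε / 2 * n := by field_simp
  rw [hGn] at hlt
  linarith


lemma antitone_closeds_stabilize [NoetherianSpace X] (C : ℕ → Closeds X) (hC : Antitone C) :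
    ∃ N, ∀ n, N ≤ n → C n = C N := by
  obtain ⟨m, hmem, hmin⟩ := (wellFounded_lt (α := Closeds X)).has_min
    (Set.range C) (Set.range_nonempty C)
  obtain ⟨N, rfl⟩ := hmem
  exact ⟨N, fun n hn => (hC hn).lt_or_eq.resolve_left (fun h => hmin _ (Set.mem_range_self n) h)⟩

lemma tail_stabilize [NoetherianSpace X] (g : X → X) (x : X) :
    ∃ (N₀ : ℕ) (Ω : Closeds X),
      ∀ M : ℕ, closure ((fun k => g^[k] (g^[N₀] x)) '' Set.Ici M) = (Ω : Set X) := by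
  set C : ℕ → Closeds X := fun N => ⟨closure ((fun k => g^[k] x) '' Set.Ici N), isClosed_closure⟩
    with hCdef
  have hC : Antitone C := by
    intro a b hab
    exact closure_mono (Set.image_mono (Set.Ici_subset_Ici.2 hab))
  obtain ⟨N₀, hN₀⟩ := antitone_closeds_stabilize C hC
  refine ⟨N₀, C N₀, fun M => ?_⟩
  have himg : (fun k => g^[k] (g^[N₀] x)) '' Set.Ici M = (fun k => g^[k] x) '' Set.Ici (N₀ + M) := by
    ext y
    constructor
    · rintro ⟨k, hk, rfl⟩
      simp only [Set.mem_Ici] at hk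
      refine ⟨k + N₀, by simp only [Set.mem_Ici]; omega, ?_⟩
      show g^[k + N₀] x = g^[k] (g^[N₀] x)
      rw [Function.iterate_add_apply]
    · rintro ⟨n, hn, rfl⟩
      simp only [Set.mem_Ici] at hn
      refine ⟨n - N₀, by simp only [Set.mem_Ici]; omega, ?_⟩
      show g^[n - N₀] (g^[N₀] x) = g^[n] x
      rw [← Function.iterate_add_apply]
      congr 1
      omega
  rw [himg]
  have h := hN₀ (N₀ + M) (by omega)
  calc closure ((fun k => g^[k] x) '' Set.Ici (N₀ + M)) = (C (N₀ + M) : Set X) := rfl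
  _ = (C N₀ : Set X) := by rw [h]

lemma helper1 (d : ℕ) (hd : 0 < d) (w : ℕ → ℕ) (B : ℝ)
    (h : ∀ᶠ n : ℕ in atTop, |(d : ℝ) * (w n) - n| ≤ B) :
    Tendsto (fun n => (w n : ℝ) / n) atTop (nhds (1 / d)) := by
  have hdR : (0:ℝ) < d := by exact_mod_cast hd
  rw [tendsto_iff_dist_tendsto_zero]
  apply squeeze_zero' (g := fun n : ℕ => (B / d) / n)
    (Eventually.of_forall (fun n => dist_nonneg))
  · filter_upwards [h, eventually_ge_atTop 1] with n hn hn1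
    have hnR : (0:ℝ) < n := by exact_mod_cast hn1
    rw [Real.dist_eq]
    have heq : (w n : ℝ) / n - 1 / d = ((d : ℝ) * (w n) - n) / (d * n) := by
      field_simp
    rw [heq, abs_div, abs_of_pos (mul_pos hdR hnR), div_div]
    gcongr
  · exact tendsto_const_div_atTop_nhds_zero_nat (B / d)

lemma helper2 (v : ℕ → ℕ) (L r : ℝ) (Q : ℕ → ℕ)
    (hv : Tendsto (fun q => (v q : ℝ) / q) atTop (nhds L))
    (hQ1 : Tendsto Q atTop atTop)
    (hQ2 : Tendsto (fun n => (Q n : ℝ) / n) atTop (nhds r)) :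
    Tendsto (fun n => (v (Q n) : ℝ) / n) atTop (nhds (L * r)) := by
  have h1 : Tendsto (fun n => ((v (Q n) : ℝ) / (Q n)) * ((Q n : ℝ) / n)) atTop (nhds (L * r)) :=
    (hv.comp hQ1).mul hQ2
  apply h1.congr'
  filter_upwards [hQ1.eventually_ge_atTop 1, eventually_ge_atTop 1] with n hn hn1
  have hQn : ((Q n : ℕ) : ℝ) ≠ 0 := by
    have h0 : (0:ℕ) < Q n := hn
    positivity
  have hnn : ((n : ℕ) : ℝ) ≠ 0 := by
    have h0 : (0:ℕ) < n := hn1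
    positivity
  field_simp

lemma combine (u : ℕ → ℕ) (hu : Monotone u) (d n₂ : ℕ) (hd : 0 < d)
    (v : ℕ → ℕ → ℕ) (L : ℕ → ℝ)
    (hv : ∀ c, c < d → Tendsto (fun Q => (v c Q : ℝ) / Q) atTop (nhds (L c)))
    (hkey : ∀ Q, u (n₂ + d * Q) = u n₂ + ∑ c ∈ Finset.range d, v c Q) :
    Tendsto (fun n => (u n : ℝ) / n) atTop (nhds ((∑ c ∈ Finset.range d, L c) / d)) := by
  set Q : ℕ → ℕ := fun n => (n - n₂) / d with hQdef
  have hQ1 : Tendsto Q atTop atTop := by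
    rw [tendsto_atTop_atTop]
    intro b
    refine ⟨n₂ + d * b, fun n hn => ?_⟩
    have hn' : d * b + n₂ ≤ n := by
      calc d * b + n₂ = n₂ + d * b := by ring
      _ ≤ n := hn
    show b ≤ (n - n₂) / d
    rw [Nat.le_div_iff_mul_le hd, mul_comm]
    exact Nat.le_sub_of_add_le hn'
  have hbound : ∀ n, n₂ ≤ n → (d * Q n ≤ n - n₂ ∧ n - n₂ < d * Q n + d) := by
    intro n hn
    have h1 := Nat.div_add_mod (n - n₂) d
    have h2 : (n - n₂) % d < d := Nat.mod_lt _ hd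
    show d * ((n - n₂) / d) ≤ n - n₂ ∧ n - n₂ < d * ((n - n₂) / d) + d
    generalize hk : d * ((n - n₂) / d) = k at h1 ⊢
    omega
  have hcast : ∀ n, n₂ ≤ n → ((d : ℝ) * Q n ≤ (n : ℝ) - n₂ ∧ (n : ℝ) - n₂ < (d : ℝ) * Q n + d) := by
    intro n hn
    obtain ⟨e1, e2⟩ := hbound n hn
    have c0 : ((n - n₂ : ℕ) : ℝ) = (n : ℝ) - n₂ := Nat.cast_sub hn
    constructor
    · have : ((d * Q n : ℕ) : ℝ) ≤ ((n - n₂ : ℕ) : ℝ) := by exact_mod_cast e1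
      push_cast at this
      linarith [this, c0.le, c0.ge]
    · have : ((n - n₂ : ℕ) : ℝ) < ((d * Q n + d : ℕ) : ℝ) := by exact_mod_cast e2
      push_cast at this
      linarith [this, c0.le, c0.ge]
  have hQ2 : Tendsto (fun n => (Q n : ℝ) / n) atTop (nhds (1 / d)) := by
    apply helper1 d hd Q ((n₂ : ℝ) + d)
    filter_upwards [eventually_ge_atTop n₂] with n hn
    obtain ⟨e1, e2⟩ := hcast n hn
    rw [abs_le]
    constructor <;> [skip; skip] <;> push_cast <;> linarith
  have hQ1' : Tendsto (fun n => Q n + 1) atTop atTop :=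
    (tendsto_add_atTop_nat 1).comp hQ1

  have hQ2' : Tendsto (fun n => ((Q n + 1 : ℕ) : ℝ) / n) atTop (nhds (1 / d)) := by
    apply helper1 d hd (fun n => Q n + 1) ((n₂ : ℝ) + d)
    filter_upwards [eventually_ge_atTop n₂] with n hn
    obtain ⟨e1, e2⟩ := hcast n hn
    rw [abs_le]
    constructor <;> push_cast <;> linarith
  have hdR : (0:ℝ) < d := by exact_mod_cast hd
  have hsumval : (0:ℝ) + ∑ c ∈ Finset.range d, L c * (1 / d) = (∑ c ∈ Finset.range d, L c) / d := by
    rw [zero_add, Finset.sum_div]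
    exact Finset.sum_congr rfl (fun c _ => by rw [mul_one_div])
  have Tlow : Tendsto (fun n => (u n₂ : ℝ) / n + ∑ c ∈ Finset.range d, (v c (Q n) : ℝ) / n)
      atTop (nhds ((∑ c ∈ Finset.range d, L c) / d)) := by
    rw [← hsumval]
    exact (tendsto_const_div_atTop_nhds_zero_nat _).add
      (tendsto_finset_sum _ (fun c hc => helper2 (v c) (L c) (1 / d) Q
        (hv c (Finset.mem_range.1 hc)) hQ1 hQ2))
  have Thigh : Tendsto (fun n => (u n₂ : ℝ) / n + ∑ c ∈ Finset.range d, (v c (Q n + 1) : ℝ) / n)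
      atTop (nhds ((∑ c ∈ Finset.range d, L c) / d)) := by
    rw [← hsumval]
    exact (tendsto_const_div_atTop_nhds_zero_nat _).add
      (tendsto_finset_sum _ (fun c hc => helper2 (v c) (L c) (1 / d) (fun n => Q n + 1)
        (hv c (Finset.mem_range.1 hc)) hQ1' hQ2'))
  refine tendsto_of_tendsto_of_tendsto_of_le_of_le' Tlow Thigh ?_ ?_
  · filter_upwards [eventually_ge_atTop n₂, eventually_ge_atTop 1] with n hn hn1
    have hnR : (0:ℝ) < n := by exact_mod_cast hn1
    have h1 : u n₂ + ∑ c ∈ Finset.range d, v c (Q n) ≤ u n := by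
      rw [← hkey]
      apply hu
      have := (hbound n hn).1
      omega
    have h2 : ((u n₂ + ∑ c ∈ Finset.range d, v c (Q n) : ℕ) : ℝ) / n ≤ (u n : ℝ) / n := by
      gcongr <;> exact_mod_cast h1
    calc (u n₂ : ℝ) / n + ∑ c ∈ Finset.range d, (v c (Q n) : ℝ) / n
        = ((u n₂ + ∑ c ∈ Finset.range d, v c (Q n) : ℕ) : ℝ) / n := by
          push_cast
          rw [add_div, Finset.sum_div]
    _ ≤ (u n : ℝ) / n := h2
  · filter_upwards [eventually_ge_atTop n₂, eventually_ge_atTop 1] with n hn hn1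
    have hnR : (0:ℝ) < n := by exact_mod_cast hn1
    have h1 : u n ≤ u n₂ + ∑ c ∈ Finset.range d, v c (Q n + 1) := by
      rw [← hkey]
      apply hu
      have := (hbound n hn).2
      have : n - n₂ < d * Q n + d := this
      have hdq : d * (Q n + 1) = d * Q n + d := by ring
      omega
    have h2 : (u n : ℝ) / n ≤ ((u n₂ + ∑ c ∈ Finset.range d, v c (Q n + 1) : ℕ) : ℝ) / n := by
      gcongr <;> exact_mod_cast h1
    calc (u n : ℝ) / n ≤ ((u n₂ + ∑ c ∈ Finset.range d, v c (Q n + 1) : ℕ) : ℝ) / n := h2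
    _ = (u n₂ : ℝ) / n + ∑ c ∈ Finset.range d, (v c (Q n + 1) : ℝ) / n := by
          push_cast
          rw [add_div, Finset.sum_div]


/-- Main induction: frequency of visits to any closed set converges, for points all of whose
orbit tail closures equal a fixed closed set Ω. -/
lemma main [NoetherianSpace X] :
    ∀ Ω : Closeds X, ∀ g : X → X, Continuous g → ∀ (x : X) (T : Set X), IsClosed T →
      (∀ N : ℕ, closure ((fun k => g^[k] x) '' Set.Ici N) = (Ω : Set X)) →
      ∃ L : ℝ, Tendsto (fun n => (vcnt g T x n : ℝ) / n) atTop (nhds L) := by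
  intro Ω
  induction Ω using WellFounded.induction (wellFounded_lt (α := Closeds X)) with
  | _ Ω IH =>
  intro g hg x T hT htail
  have horbΩ : ∀ n : ℕ, g^[n] x ∈ (Ω : Set X) := by
    intro n
    rw [← htail 0]
    exact subset_closure ⟨n, Set.mem_Ici.2 (Nat.zero_le n), rfl⟩
  by_cases hsub : (Ω : Set X) ⊆ T
  · refine ⟨1, ?_⟩
    have hval : ∀ n, vcnt g T x n = n := by
      intro n
      have : ∀ i ∈ Finset.range n, (if g^[i] x ∈ T then 1 else 0) = 1 :=
        fun i _ => if_pos (hsub (horbΩ i))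
      rw [vcnt, Finset.sum_congr rfl this, Finset.sum_const, Finset.card_range, smul_eq_mul,
        mul_one]
    refine tendsto_const_nhds.congr' ?_
    filter_upwards [eventually_ge_atTop 1] with n hn
    have hnR : ((n:ℕ):ℝ) ≠ 0 := by
      have : (0:ℕ) < n := hn
      positivity
    rw [hval n, div_self hnR]
  by_cases hpos : posdens (vcnt g T x)
  swap
  · exact ⟨0, tendsto_zero_of_not_posdens _ hpos⟩
  -- the interesting case
  set TΩ : Closeds X := ⟨T ∩ (Ω : Set X), hT.inter Ω.isClosed⟩ with hTΩdef
  have hcnt_inter : vcnt g (TΩ : Set X) x = vcnt g T x := by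
    funext n
    refine Finset.sum_congr rfl (fun i _ => ?_)
    by_cases h : g^[i] x ∈ T
    · rw [if_pos h, if_pos ⟨h, horbΩ i⟩]
    · rw [if_neg h, if_neg (fun hc => h hc.1)]
  set S : Set (Closeds X) := {C | (C : Set X) ⊆ (TΩ : Set X) ∧ posdens (vcnt g (C : Set X) x)}
    with hSdef
  have hSne : S.Nonempty := ⟨TΩ, subset_rfl, by rw [hcnt_inter]; exact hpos⟩
  obtain ⟨Tm, hTmS, hTmmin⟩ := (wellFounded_lt (α := Closeds X)).has_min S hSne
  obtain ⟨d, hd, hpd⟩ := pigeonhole g (Tm : Set X) x hTmS.2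
  set T' : Closeds X := ⟨(Tm : Set X) ∩ (g^[d])⁻¹' (Tm : Set X),
    Tm.isClosed.inter (Tm.isClosed.preimage (hg.iterate d))⟩ with hT'def
  have hT'S : T' ∈ S := ⟨Set.Subset.trans Set.inter_subset_left hTmS.1, hpd⟩
  have hT'le : T' ≤ Tm := by
    intro y hy
    exact hy.1
  have hT'eq : T' = Tm := hT'le.lt_or_eq.resolve_left (hTmmin T' hT'S)
  have hTminv : (Tm : Set X) ⊆ (g^[d])⁻¹' (Tm : Set X) := by
    intro y hy
    have : y ∈ (T' : Set X) := by rw [hT'eq]; exact hy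
    exact this.2
  -- find a time n₀ entering Tm
  obtain ⟨ε, hε, hdens⟩ := hTmS.2
  obtain ⟨n1, hn11, hn12⟩ := hdens 1
  have hvpos : vcnt g (Tm : Set X) x n1 ≠ 0 := by
    intro h0
    rw [h0] at hn12
    have : (0:ℝ) < ε * n1 := by
      have : (0:ℝ) < (n1:ℝ) := by exact_mod_cast hn11
      positivity
    simp at hn12
    linarith
  obtain ⟨n₀, hn₀lt, hn₀mem⟩ := vcnt_pos_exists g (Tm : Set X) x n1 hvpos
  set y₀ : X := g^[n₀] x with hy₀def
  set h : X → X := g^[d] with hhdef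
  have horbTm : ∀ k, h^[k] y₀ ∈ (Tm : Set X) := by
    intro k
    induction k with
    | zero => exact hn₀mem
    | succ k ih =>
      rw [Function.iterate_succ_apply']
      exact hTminv ih
  obtain ⟨N₁, Ω₁, hΩ₁⟩ := tail_stabilize h y₀
  set y₁ : X := h^[N₁] y₀ with hy₁def
  have hΩ₁sub : (Ω₁ : Set X) ⊆ (Tm : Set X) := by
    rw [← hΩ₁ 0]
    apply closure_minimal ?_ Tm.isClosed
    rintro _ ⟨k, -, rfl⟩
    show h^[k] (h^[N₁] y₀) ∈ (Tm : Set X)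
    rw [← Function.iterate_add_apply]
    exact horbTm _
  have hTΩlt : TΩ < Ω := by
    refine lt_of_le_of_ne (fun y hy => hy.2) ?_
    intro he
    apply hsub
    intro y hy
    have : y ∈ (TΩ : Set X) := by rw [he]; exact hy
    exact this.1
  have hΩ₁lt : Ω₁ < Ω := by
    refine lt_of_le_of_lt ?_ hTΩlt
    intro y hy
    exact hTmS.1 (hΩ₁sub hy)
  -- recursion for each residue class
  have IHres : ∀ c : ℕ, ∃ L : ℝ, c < d →
      Tendsto (fun Q => (vcnt h ((g^[c])⁻¹' T) y₁ Q : ℝ) / Q) atTop (nhds L) := by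
    intro c
    by_cases hc : c < d
    · obtain ⟨L, hL⟩ := IH Ω₁ hΩ₁lt h (hg.iterate d) y₁ ((g^[c])⁻¹' T)
        (hT.preimage (hg.iterate c)) hΩ₁
      exact ⟨L, fun _ => hL⟩
    · exact ⟨0, fun hcc => absurd hcc hc⟩
  choose L hL using IHres
  -- recombination
  set n₂ : ℕ := d * N₁ + n₀ with hn₂def
  have hy₁x : g^[n₂] x = y₁ := by
    rw [hn₂def, Function.iterate_add_apply, hy₁def, hy₀def, hhdef, Function.iterate_mul]
  have hkey : ∀ Q, vcnt g T x (n₂ + d * Q)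
      = vcnt g T x n₂ + ∑ c ∈ Finset.range d, vcnt h ((g^[c])⁻¹' T) y₁ Q := by
    intro Q
    rw [vcnt_shift, hy₁x, vcnt_block]
  exact ⟨_, combine (vcnt g T x) (vcnt_mono g T x) d n₂ hd
    (fun c Q => vcnt h ((g^[c])⁻¹' T) y₁ Q) L (fun c hc => hL c hc) hkey⟩


/-- visit frequencies converge for every starting point -/
lemma freq [NoetherianSpace X] (f : X → X) (hf : Continuous f) (T : Set X) (hT : IsClosed T)
    (x : X) : ∃ L : ℝ, Tendsto (fun n => (vcnt f T x n : ℝ) / n) atTop (nhds L) := by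
  obtain ⟨N₀, Ω, hΩ⟩ := tail_stabilize f x
  obtain ⟨L, hL⟩ := main Ω f hf (f^[N₀] x) T hT hΩ
  have hkey : ∀ Q, vcnt f T x (N₀ + 1 * Q)
      = vcnt f T x N₀ + ∑ _c ∈ Finset.range 1, vcnt f T (f^[N₀] x) Q := by
    intro Q
    rw [one_mul, vcnt_shift, Finset.sum_range_one]
  have h := combine (vcnt f T x) (vcnt_mono f T x) 1 N₀ one_pos
    (fun _c Q => vcnt f T (f^[N₀] x) Q) (fun _ => L) (fun c _ => hL) hkey
  exact ⟨_, by simpa using h⟩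

/-- uniform bound on log κ₁ via Noetherianity -/
lemma exists_bound [NoetherianSpace X] (κ₁ : X → ℝ) (h1 : ∀ x, 1 ≤ κ₁ x)
    (husc : ∀ δ : ℝ, IsClosed {x : X | δ ≤ κ₁ x}) :
    ∃ M : ℝ, ∀ x, Real.log (κ₁ x) ≤ M := by
  set C : ℕ → Closeds X := fun m => ⟨{x : X | Real.exp m ≤ κ₁ x}, husc _⟩ with hCdef
  have hC : Antitone C := by
    intro a b hab y hy
    have : Real.exp a ≤ Real.exp b := Real.exp_le_exp.2 (by exact_mod_cast hab)
    exact le_trans this hy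
  obtain ⟨N, hN⟩ := antitone_closeds_stabilize C hC
  refine ⟨N, fun x => ?_⟩
  by_contra hlt
  push_neg at hlt
  have hx : (0:ℝ) < κ₁ x := lt_of_lt_of_le one_pos (h1 x)
  have hxN : x ∈ (C N : Set X) := by
    show Real.exp N ≤ κ₁ x
    rw [← Real.exp_log hx]
    exact le_of_lt (Real.exp_lt_exp.2 hlt)
  obtain ⟨m, hm⟩ := exists_nat_gt (max (N : ℝ) (Real.log (κ₁ x)))
  have hmN : N ≤ m := by
    have : (N:ℝ) < m := lt_of_le_of_lt (le_max_left _ _) hm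
    exact_mod_cast le_of_lt this
  have hxm : x ∈ (C m : Set X) := by
    rw [hN m hmN]
    exact hxN
  have : (m : ℝ) ≤ Real.log (κ₁ x) := by
    rw [Real.le_log_iff_exp_le hx]
    exact hxm
  have : Real.log (κ₁ x) < m := lt_of_le_of_lt (le_max_right _ _) hm
  linarith

/-- Birkhoff averages of a bounded nonneg usc function converge along every orbit -/
lemma exists_birk_limit [NoetherianSpace X] (f : X → X) (hf : Continuous f)
    (a : X → ℝ) (ha0 : ∀ y, 0 ≤ a y) (M : ℝ) (haM : ∀ y, a y ≤ M)
    (husc : ∀ δ : ℝ, IsClosed {y : X | δ ≤ a y}) (x : X) :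
    ∃ ℓ : ℝ, Tendsto (fun n => (∑ i ∈ Finset.range n, a (f^[i] x)) / n) atTop (nhds ℓ) := by
  set A : ℕ → ℝ := fun n => (∑ i ∈ Finset.range n, a (f^[i] x)) / n with hAdef
  have key : ∀ ε : ℝ, 0 < ε → ∃ ℓε : ℝ, ∀ᶠ n in atTop, |A n - ℓε| ≤ 2 * ε := by
    intro ε hε
    set J : ℕ := ⌈M / ε⌉₊ with hJdef
    set T : ℕ → Set X := fun j => {y : X | (j : ℝ) * ε ≤ a y} with hTdef
    have hfreq : ∀ j : ℕ, ∃ L : ℝ,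
        Tendsto (fun n => (vcnt f (T j) x n : ℝ) / n) atTop (nhds L) :=
      fun j => freq f hf (T j) (husc _) x
    choose L hL using hfreq
    refine ⟨ε * ∑ j ∈ Finset.Icc 1 J, L j, ?_⟩
    have hpt : ∀ y : X,
        ε * (∑ j ∈ Finset.Icc 1 J, if y ∈ T j then (1:ℝ) else 0) ≤ a y ∧
        a y ≤ ε * (∑ j ∈ Finset.Icc 1 J, if y ∈ T j then (1:ℝ) else 0) + ε := by
      intro y
      set m : ℕ := ⌊a y / ε⌋₊ with hmdef
      have hayε : 0 ≤ a y / ε := div_nonneg (ha0 y) hε.le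
      have hmJ : m ≤ J := by
        have h1 : a y / ε ≤ M / ε := by gcongr; exact haM y
        calc m ≤ ⌊M / ε⌋₊ := Nat.floor_mono h1
        _ ≤ ⌈M / ε⌉₊ := Nat.floor_le_ceil _
      have hfe : (Finset.Icc 1 J).filter (fun j => y ∈ T j) = Finset.Icc 1 m := by
        ext j
        simp only [Finset.mem_filter, Finset.mem_Icc, hTdef, Set.mem_setOf_eq]
        constructor
        · rintro ⟨⟨h1j, hjJ⟩, hcond⟩
          refine ⟨h1j, ?_⟩
          rw [hmdef]
          apply Nat.le_floor
          rw [le_div_iff₀ hε]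
          exact hcond
        · rintro ⟨h1j, hjm⟩
          refine ⟨⟨h1j, le_trans hjm hmJ⟩, ?_⟩
          have hc1 : (j : ℝ) ≤ (m : ℝ) := by exact_mod_cast hjm
          have hc2 : (j : ℝ) ≤ a y / ε := le_trans hc1 (Nat.floor_le hayε)
          rwa [le_div_iff₀ hε] at hc2
      have hsumeq : (∑ j ∈ Finset.Icc 1 J, if y ∈ T j then (1:ℝ) else 0) = (m : ℝ) := by
        rw [Finset.sum_boole, hfe, Nat.card_Icc]
        simp
      rw [hsumeq]
      constructor
      · have h3 : (m : ℝ) ≤ a y / ε := Nat.floor_le hayε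
        rw [le_div_iff₀ hε] at h3
        linarith
      · have h4 : a y / ε < (m : ℝ) + 1 := Nat.lt_floor_add_one _
        rw [div_lt_iff₀ hε] at h4
        linarith
    have hvcast : ∀ (Tset : Set X) (n : ℕ), ((vcnt f Tset x n : ℕ) : ℝ)
        = ∑ i ∈ Finset.range n, if f^[i] x ∈ Tset then (1:ℝ) else 0 := by
      intro Tset n
      rw [vcnt]
      push_cast
      refine Finset.sum_congr rfl (fun i _ => ?_)
      split <;> simp
    have hswap : ∀ n : ℕ, ∑ j ∈ Finset.Icc 1 J, (vcnt f (T j) x n : ℝ)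
        = ∑ i ∈ Finset.range n, ∑ j ∈ Finset.Icc 1 J, (if f^[i] x ∈ T j then (1:ℝ) else 0) := by
      intro n
      calc ∑ j ∈ Finset.Icc 1 J, (vcnt f (T j) x n : ℝ)
          = ∑ j ∈ Finset.Icc 1 J, ∑ i ∈ Finset.range n, (if f^[i] x ∈ T j then (1:ℝ) else 0) :=
            Finset.sum_congr rfl (fun j _ => hvcast (T j) n)
      _ = _ := Finset.sum_comm
    have hsums : ∀ n : ℕ,
        ε * (∑ j ∈ Finset.Icc 1 J, (vcnt f (T j) x n : ℝ)) ≤ ∑ i ∈ Finset.range n, a (f^[i] x)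
        ∧ (∑ i ∈ Finset.range n, a (f^[i] x))
            ≤ ε * (∑ j ∈ Finset.Icc 1 J, (vcnt f (T j) x n : ℝ)) + n * ε := by
      intro n
      constructor
      · calc ε * (∑ j ∈ Finset.Icc 1 J, (vcnt f (T j) x n : ℝ))
            = ∑ i ∈ Finset.range n,
                ε * ∑ j ∈ Finset.Icc 1 J, (if f^[i] x ∈ T j then (1:ℝ) else 0) := by
              rw [hswap n, Finset.mul_sum]
        _ ≤ ∑ i ∈ Finset.range n, a (f^[i] x) :=
              Finset.sum_le_sum (fun i _ => (hpt (f^[i] x)).1)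
      · calc (∑ i ∈ Finset.range n, a (f^[i] x))
            ≤ ∑ i ∈ Finset.range n,
                (ε * (∑ j ∈ Finset.Icc 1 J, if f^[i] x ∈ T j then (1:ℝ) else 0) + ε) :=
              Finset.sum_le_sum (fun i _ => (hpt (f^[i] x)).2)
        _ = ε * (∑ j ∈ Finset.Icc 1 J, (vcnt f (T j) x n : ℝ)) + n * ε := by
              rw [Finset.sum_add_distrib, Finset.sum_const, Finset.card_range, ← Finset.mul_sum,
                ← hswap n, nsmul_eq_mul]
    have hG : Tendsto (fun n => ε * ∑ j ∈ Finset.Icc 1 J, (vcnt f (T j) x n : ℝ) / n)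
        atTop (nhds (ε * ∑ j ∈ Finset.Icc 1 J, L j)) :=
      (tendsto_finset_sum _ (fun j _ => hL j)).const_mul ε
    have hGev : ∀ᶠ n in atTop,
        |ε * (∑ j ∈ Finset.Icc 1 J, (vcnt f (T j) x n : ℝ) / n)
          - ε * ∑ j ∈ Finset.Icc 1 J, L j| ≤ ε := by
      obtain ⟨N, hN⟩ := (Metric.tendsto_atTop.1 hG) ε hε
      filter_upwards [eventually_ge_atTop N] with n hn
      have h5 := hN n hn
      rw [Real.dist_eq] at h5
      exact h5.le
    filter_upwards [hGev, eventually_ge_atTop 1] with n hGn hn1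
    have hnR : (0:ℝ) < n := by exact_mod_cast hn1
    obtain ⟨hlow, hhigh⟩ := hsums n
    have hdiv : ε * (∑ j ∈ Finset.Icc 1 J, (vcnt f (T j) x n : ℝ) / n)
        = (ε * ∑ j ∈ Finset.Icc 1 J, (vcnt f (T j) x n : ℝ)) / n := by
      rw [← Finset.sum_div, mul_div_assoc]
    have h1 : ε * (∑ j ∈ Finset.Icc 1 J, (vcnt f (T j) x n : ℝ) / n) ≤ A n := by
      rw [hdiv, hAdef]
      exact div_le_div_of_nonneg_right hlow (Nat.cast_nonneg n)
    have h2 : A n ≤ ε * (∑ j ∈ Finset.Icc 1 J, (vcnt f (T j) x n : ℝ) / n) + ε := by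
      rw [hdiv, hAdef]
      have h6 : (∑ i ∈ Finset.range n, a (f^[i] x)) / n
          ≤ (ε * (∑ j ∈ Finset.Icc 1 J, (vcnt f (T j) x n : ℝ)) + n * ε) / n :=
        div_le_div_of_nonneg_right hhigh (Nat.cast_nonneg n)
      calc (∑ i ∈ Finset.range n, a (f^[i] x)) / n ≤ _ := h6
      _ = (ε * ∑ j ∈ Finset.Icc 1 J, (vcnt f (T j) x n : ℝ)) / n + ε := by
            rw [add_div]
            congr 1
            rw [mul_comm, mul_div_assoc, div_self hnR.ne', mul_one]
    rw [abs_le] at hGn ⊢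
    constructor <;> linarith [hGn.1, hGn.2]
  have hc : CauchySeq A := by
    rw [Metric.cauchySeq_iff']
    intro ε₀ hε₀
    obtain ⟨ℓε, hev⟩ := key (ε₀ / 5) (by positivity)
    obtain ⟨N, hN⟩ := eventually_atTop.1 hev
    refine ⟨N, fun n hn => ?_⟩
    have h1 := hN n hn
    have h2 := hN N le_rfl
    rw [Real.dist_eq]
    have habs : |A n - A N| ≤ |A n - ℓε| + |ℓε - A N| := abs_sub_le _ _ _
    rw [abs_sub_comm ℓε (A N)] at habs
    calc |A n - A N| ≤ |A n - ℓε| + |A N - ℓε| := habs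
    _ ≤ 2 * (ε₀ / 5) + 2 * (ε₀ / 5) := add_le_add h1 h2
    _ < ε₀ := by linarith
  obtain ⟨ℓ, hℓ⟩ := cauchySeq_tendsto_of_complete hc
  exact ⟨ℓ, hℓ⟩


end Stmt14

open Filter

theorem stmt_14 {X : Type*} [TopologicalSpace X] [Nonempty X]
    [TopologicalSpace.NoetherianSpace X] [IrreducibleSpace X]
    (f : X → X) (hf_cont : Continuous f) (hf_open : IsOpenMap f)
    (hf_closed : IsClosedMap f) (hf_surj : Function.Surjective f)
    (κ : ℕ → X → ℝ)
    (hκ1 : ∀ n x, 1 ≤ κ n x)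
    (hκmin : ∀ n, ∃ x, κ n x = 1)
    (hκusc : ∀ n (δ : ℝ), IsClosed {x : X | δ ≤ κ n x})
    (hκmult : ∀ n m x, κ (n + m) x = κ n x * κ m (f^[n] x))
    (hBaire : ∀ Y : Set X, Y.Nonempty → IsClosed Y → IsIrreducible Y →
      ∀ Z : ℕ → Set X, (∀ i, IsClosed (Z i) ∧ Z i ⊂ Y) → Y ≠ ⋃ i, Z i)
    (k : ℕ) (hdimX : topologicalKrullDim X = (k : ℕ∞)) :
    ∃ κp : X → ℝ,
      (∀ x : X,
        Tendsto (fun n : ℕ => (κ n x) ^ (1 / (n : ℝ))) atTop (nhds (κp x))) ∧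
      ∀ x : X, κp (f x) = κp x := by
  classical
  -- positivity facts
  have hκpos : ∀ n x, (0:ℝ) < κ n x := fun n x => lt_of_lt_of_le one_pos (hκ1 n x)
  set a : X → ℝ := fun y => Real.log (κ 1 y) with hadef
  have ha0 : ∀ y, 0 ≤ a y := fun y => Real.log_nonneg (hκ1 1 y)
  have husca : ∀ δ : ℝ, IsClosed {y : X | δ ≤ a y} := by
    intro δ
    have : {y : X | δ ≤ a y} = {y : X | Real.exp δ ≤ κ 1 y} := by
      ext y
      simp only [Set.mem_setOf_eq, hadef]
      rw [Real.le_log_iff_exp_le (hκpos 1 y)]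
    rw [this]
    exact hκusc 1 (Real.exp δ)
  obtain ⟨M, hM⟩ := Stmt14.exists_bound (κ 1) (hκ1 1) (hκusc 1)
  -- Birkhoff sum identity
  have hκ0 : ∀ x, κ 0 x = 1 := by
    intro x
    have h := hκmult 0 0 x
    simp only [Nat.add_zero, Function.iterate_zero, id_eq] at h
    nlinarith [hκ1 0 x]
  have hbirk : ∀ x n, Real.log (κ n x) = ∑ i ∈ Finset.range n, a (f^[i] x) := by
    intro x n
    induction n with
    | zero => simp [hκ0 x]
    | succ n ih =>
      have h := hκmult n 1 x
      rw [h, Real.log_mul (hκpos n x).ne' (hκpos 1 _).ne', Finset.sum_range_succ, ih]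
  -- limit function
  have hlim : ∀ x : X, ∃ ℓ : ℝ,
      Tendsto (fun n => Real.log (κ n x) / n) atTop (nhds ℓ) := by
    intro x
    obtain ⟨ℓ, hℓ⟩ := Stmt14.exists_birk_limit f hf_cont a ha0 M hM husca x
    refine ⟨ℓ, hℓ.congr (fun n => ?_)⟩
    rw [hbirk x n]
  choose ℓf hℓf using hlim
  refine ⟨fun x => Real.exp (ℓf x), ?_, ?_⟩
  · intro x
    have h1 : Tendsto (fun n => Real.exp (Real.log (κ n x) / n)) atTop
        (nhds (Real.exp (ℓf x))) := (Real.continuous_exp.tendsto _).comp (hℓf x)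
    refine h1.congr (fun n => ?_)
    rw [Real.rpow_def_of_pos (hκpos n x), mul_one_div]
  · intro x
    suffices h : ℓf (f x) = ℓf x by
      show Real.exp (ℓf (f x)) = Real.exp (ℓf x)
      rw [h]
    have h1 := hℓf (f x)
    -- build a second limit statement for the same sequence
    have hrel : ∀ n : ℕ, Real.log (κ n (f x)) = Real.log (κ (n + 1) x) - Real.log (κ 1 x) := by
      intro n
      have h := hκmult 1 n x
      rw [Function.iterate_one] at h
      rw [add_comm n 1, h, Real.log_mul (hκpos 1 x).ne' (hκpos n (f x)).ne']
      ring
    have t1 : Tendsto (fun n : ℕ => Real.log (κ (n + 1) x) / ((n : ℝ) + 1)) atTop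
        (nhds (ℓf x)) := by
      have := (hℓf x).comp (tendsto_add_atTop_nat 1)
      refine this.congr (fun n => ?_)
      show Real.log (κ (n + 1) x) / ((n + 1 : ℕ) : ℝ) = _
      push_cast
      ring
    have t2 : Tendsto (fun n : ℕ => ((n : ℝ) + 1) / n) atTop (nhds 1) := by
      have h0 : Tendsto (fun n : ℕ => (1 : ℝ) / n + 1) atTop (nhds (0 + 1)) :=
        (tendsto_const_div_atTop_nhds_zero_nat 1).add tendsto_const_nhds
      rw [zero_add] at h0
      refine h0.congr' ?_
      filter_upwards [eventually_ge_atTop 1] with n hn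
      have hnR : ((n:ℕ):ℝ) ≠ 0 := by
        have : (0:ℕ) < n := hn
        positivity
      field_simp
      ring
    have t3 : Tendsto (fun n : ℕ => Real.log (κ (n + 1) x) / n) atTop (nhds (ℓf x)) := by
      have hprod := t1.mul t2
      rw [mul_one] at hprod
      refine hprod.congr' ?_
      filter_upwards [eventually_ge_atTop 1] with n hn
      have hn1 : ((n : ℝ) + 1) ≠ 0 := by positivity
      rw [div_mul_div_comm, mul_comm ((n:ℝ) + 1) (n:ℝ), mul_div_mul_right _ _ hn1]
    have t4 : Tendsto (fun n : ℕ => Real.log (κ n (f x)) / n) atTop (nhds (ℓf x)) := by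
      have hsub : Tendsto (fun n : ℕ => Real.log (κ (n + 1) x) / n - Real.log (κ 1 x) / n)
          atTop (nhds (ℓf x - 0)) :=
        t3.sub (tendsto_const_div_atTop_nhds_zero_nat _)
      rw [sub_zero] at hsub
      refine hsub.congr (fun n => ?_)
      rw [hrel n, sub_div]
    exact tendsto_nhds_unique h1 t4
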